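/- Let X be a finite set with n ≥ 2 elements, S a subsemilattice of T(X), and t, u ∈ X with u ≠ t such that for every e ∈ S, e(t) = t and e(u) ∈ {u, t}. Suppose |e^{-1}(x)| ≤ 1 for all e ∈ S and all x ∈ X \ {u, t}, and suppose |f^{-1}(u)| ≥ 2 for some f ∈ S. Then |S| < 2^{n-1}. -/

import Mathlib

def IsSubsemilattice {X : Type*} (S : Set (X → X)) : Prop :=
  S.Nonempty ∧ (∀ e ∈ S, e ∘ e = e) ∧ (∀ e ∈ S, ∀ f ∈ S, e ∘ f = f ∘ e) ∧
    (∀ e ∈ S, ∀ f ∈ S, e ∘ f ∈ S)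

theorem card_lt_of_collapse_only_at_u {X : Type*} [Fintype X] {n : ℕ}
    (hn : Fintype.card X = n) (hn2 : 2 ≤ n)
    (S : Set (X → X)) (hS : IsSubsemilattice S)
    (t u : X) (hut : u ≠ t)
    (ht : ∀ e ∈ S, e t = t) (hu : ∀ e ∈ S, e u = u ∨ e u = t)
    (hsmall : ∀ e ∈ S, ∀ x : X, x ≠ u → x ≠ t → (e ⁻¹' {x}).ncard ≤ 1)
    (hbig : ∃ f ∈ S, 2 ≤ (f ⁻¹' {u}).ncard) :
    S.ncard < 2 ^ (n - 1) := by
  classical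
  obtain ⟨hne, hidem, hcomm, hclosed⟩ := hS
  obtain ⟨f, hfS, hf2⟩ := hbig
  -- pointwise idempotency
  have hid : ∀ e ∈ S, ∀ x, e (e x) = e x := by
    intro e he x
    have := congrFun (hidem e he) x
    simpa using this
  have hcm : ∀ e ∈ S, ∀ g ∈ S, ∀ x, e (g x) = g (e x) := by
    intro e he g hg x
    have := congrFun (hcomm e he g hg) x
    simpa using this
  -- get y ≠ u with f y = u
  have hfin : (f ⁻¹' {u}).Finite := Set.toFinite _
  have h1lt : 1 < (f ⁻¹' {u}).ncard := lt_of_lt_of_le one_lt_two hf2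
  obtain ⟨a, b, ha, hb, hab⟩ := (Set.one_lt_ncard_iff hfin).1 h1lt
  simp only [Set.mem_preimage, Set.mem_singleton_iff] at ha hb
  have hy : ∃ y, f y = u ∧ y ≠ u := by
    by_cases hau : a = u
    · exact ⟨b, hb, fun h => hab (by rw [hau, h])⟩
    · exact ⟨a, ha, hau⟩
  obtain ⟨y, hfy, hyu⟩ := hy
  have hfu : f u = u := by
    have := hid f hfS y; rwa [hfy] at this
  have hyt : y ≠ t := by
    intro h; apply hut.symm
    rw [h] at hfy; rw [← hfy, ht f hfS]
  -- key fact 1: e y = y → e u = u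
  have key1 : ∀ e ∈ S, e y = y → e u = u := by
    intro e he hey
    have := hcm e he f hfS y
    rw [hfy, hey, hfy] at this
    exact this
  -- non-fixed points map to u or t
  have key2 : ∀ e ∈ S, ∀ x, e x ≠ x → e x = u ∨ e x = t := by
    intro e he x hx
    by_contra h
    push_neg at h
    have hc : ({x, e x} : Set X) ⊆ e ⁻¹' {e x} := by
      intro z hz
      rcases hz with rfl | hz
      · rfl
      · simp only [Set.mem_singleton_iff] at hz
        subst hz
        exact hid e he x
    have h2 : 2 ≤ (e ⁻¹' {e x}).ncard := by
      have : ({x, e x} : Set X).ncard = 2 := Set.ncard_pair (Ne.symm hx)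
      calc 2 = ({x, e x} : Set X).ncard := this.symm
        _ ≤ (e ⁻¹' {e x}).ncard := Set.ncard_le_ncard hc (Set.toFinite _)
    have := hsmall e he (e x) h.1 h.2
    omega
  -- injectivity: e determined by its fixed set
  have key3 : ∀ e ∈ S, ∀ g ∈ S, (∀ x, e x = x ↔ g x = x) → e = g := by
    intro e he g hg hF
    funext x
    by_cases hex : e x = x
    · rw [hex, (hF x).1 hex]
    · have hgx : g x ≠ x := fun h => hex ((hF x).2 h)
      rcases key2 e he x hex with heu | het
      · rcases key2 g hg x hgx with hgu | hgt
        · rw [heu, hgu]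
        · -- e x = u, g x = t. e u = u so g u = u; commute gives contradiction
          exfalso
          have heuu : e u = u := by
            have := hid e he x; rwa [heu] at this
          have hguu : g u = u := (hF u).1 heuu
          have := hcm e he g hg x
          rw [hgt, heu, ht e he, hguu] at this
          exact hut this.symm
      · rcases key2 g hg x hgx with hgu | hgt
        · exfalso
          have hguu : g u = u := by
            have := hid g hg x; rwa [hgu] at this
          have heuu : e u = u := (hF u).2 hguu
          have := hcm e he g hg x
          rw [hgu, het, ht g hg, heuu] at this
          exact hut this
        · rw [het, hgt]
  -- the map
  set ψ : (X → X) → Finset X := fun e => (Finset.univ.filter (fun x => e x = x)).erase t with hψ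
  have hmem : ∀ e x, x ∈ ψ e ↔ (x ≠ t ∧ e x = x) := by
    intro e x
    simp [hψ, Finset.mem_erase, Finset.mem_filter]
  have hinj : Set.InjOn ψ S := by
    intro e he g hg heq
    apply key3 e he g hg
    intro x
    by_cases hxt : x = t
    · subst hxt; rw [ht e he, ht g hg]
    · constructor
      · intro h
        have : x ∈ ψ e := (hmem e x).2 ⟨hxt, h⟩
        rw [heq] at this
        exact ((hmem g x).1 this).2
      · intro h
        have : x ∈ ψ g := (hmem g x).2 ⟨hxt, h⟩
        rw [← heq] at this
        exact ((hmem e x).1 this).2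
  -- target finset
  have hsub : ψ '' S ⊆ ↑((((Finset.univ : Finset X).erase t).powerset).erase {y}) := by
    rintro _ ⟨e, he, rfl⟩
    simp only [Finset.coe_erase, Set.mem_diff, Finset.mem_coe, Finset.mem_powerset,
      Set.mem_singleton_iff]
    constructor
    · intro x hx
      exact Finset.mem_erase.2 ⟨((hmem e x).1 hx).1, Finset.mem_univ x⟩
    · intro h
      have hyy : y ∈ ψ e := by rw [h]; exact Finset.mem_singleton_self y
      have hey : e y = y := ((hmem e y).1 hyy).2
      have heu : e u = u := key1 e he hey
      have : u ∈ ψ e := (hmem e u).2 ⟨hut, heu⟩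
      rw [h, Finset.mem_singleton] at this
      exact hyu this.symm
  have hcount : S.ncard ≤ ((((Finset.univ : Finset X).erase t).powerset).erase {y}).card := by
    calc S.ncard = (ψ '' S).ncard := (Set.ncard_image_of_injOn hinj).symm
      _ ≤ (↑((((Finset.univ : Finset X).erase t).powerset).erase {y}) : Set (Finset X)).ncard :=
          Set.ncard_le_ncard hsub (Set.toFinite _)
      _ = _ := Set.ncard_coe_finset _
  have hymem : ({y} : Finset X) ∈ ((Finset.univ : Finset X).erase t).powerset := by
    rw [Finset.mem_powerset, Finset.singleton_subset_iff]
    exact Finset.mem_erase.2 ⟨hyt, Finset.mem_univ y⟩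
  have hcard : (((Finset.univ : Finset X).erase t).powerset).card = 2 ^ (n - 1) := by
    rw [Finset.card_powerset, Finset.card_erase_of_mem (Finset.mem_univ t),
      Finset.card_univ, hn]
  have hec : ((((Finset.univ : Finset X).erase t).powerset).erase {y}).card
      = 2 ^ (n - 1) - 1 := by
    rw [Finset.card_erase_of_mem hymem, hcard]
  have hpos : 0 < 2 ^ (n - 1) := Nat.pow_pos (by norm_num)
  omega
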